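/- Let N ≥ 2, let a₁, a₂ and b₁,…,b_{N−1} and c₁,…,c_N be negative integers satisfying a₁ > c₁, b_i > c_i and b_i > c_{i+1} for 1 ≤ i ≤ N−1, and a₂ > c_N. Let z₁,…,z_N ∈ ℂ with z₁ ≠ 1. Then F_N[a₁, b₁,…,b_{N−1}, a₂; c₁,…,c_N; z₁,…,z_N] = (1−z₁)^{−b₁} · F_N[c₁−a₁, b₁,…,b_{N−1}, a₂; c₁,…,c_N; z₁/(z₁−1), −z₂/(z₁−1), z₃,…,z_N]. -/

import Mathlib

open Finset

/-- Ascending Pochhammer symbol `(a)_k = a (a+1) ⋯ (a+k-1)`. -/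
noncomputable def pochC (a : ℂ) (k : ℕ) : ℂ := ∏ i ∈ Finset.range k, (a + i)

lemma pochC_zero (a : ℂ) : pochC a 0 = 1 := by simp [pochC]

lemma pochC_succ (a : ℂ) (k : ℕ) : pochC a (k + 1) = pochC a k * (a + k) := by
  simp [pochC, Finset.prod_range_succ]

lemma pochC_add (a : ℂ) (j k : ℕ) : pochC a (j + k) = pochC a j * pochC (a + j) k := by
  rw [pochC, pochC, pochC, Finset.prod_range_add]
  congr 1
  exact Finset.prod_congr rfl fun i _ => by push_cast; ring

lemma pochC_one (a : ℂ) : pochC a 1 = a := by simp [pochC]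

lemma pochC_neg_zero {p k : ℕ} (h : p < k) : pochC (-(p : ℂ)) k = 0 := by
  apply Finset.prod_eq_zero (Finset.mem_range.2 h)
  simp

lemma pochC_neg_nat {p k : ℕ} (h : k ≤ p) :
    pochC (-(p : ℂ)) k = (-1) ^ k * (Nat.factorial p : ℂ) / (Nat.factorial (p - k) : ℂ) := by
  induction k with
  | zero =>
      simp [pochC, div_self (Nat.cast_ne_zero.2 (Nat.factorial_ne_zero p) : (Nat.factorial p : ℂ) ≠ 0)]
  | succ k ih =>
      have hk : k ≤ p := by omega
      rw [pochC_succ, ih hk]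
      have h1 : p - k = (p - (k + 1)) + 1 := by omega
      rw [h1, Nat.factorial_succ]
      have h3 : (((p - (k+1)) + 1 : ℕ) : ℂ) = (p : ℂ) - (k : ℂ) := by
        have h4 : ((p - (k+1) : ℕ) : ℂ) = (p : ℂ) - (k : ℂ) - 1 := by
          push_cast [Nat.cast_sub h]; ring
        push_cast [h4] at *; ring
      have hf : (Nat.factorial (p - (k+1)) : ℂ) ≠ 0 := Nat.cast_ne_zero.2 (Nat.factorial_ne_zero _)
      have hne : ((p - (k+1)) + 1 : ℕ) ≠ 0 := by omega
      have hne' : (((p - (k+1)) + 1 : ℕ) : ℂ) ≠ 0 := Nat.cast_ne_zero.2 hne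
      have hstep : (-(p:ℂ) + k) = -(((p - (k+1)) + 1 : ℕ) : ℂ) := by rw [h3]; ring
      rw [hstep, Nat.cast_mul]
      generalize hgc : (((p - (k+1)) + 1 : ℕ) : ℂ) = C at hne' ⊢
      generalize hgf : (Nat.factorial (p - (k+1)) : ℂ) = F at hf ⊢
      field_simp
      ring

lemma chu (m : ℕ) : ∀ c d : ℂ,
    ∑ k ∈ range (m + 1), (-1 : ℂ) ^ k * (m.choose k : ℂ) * pochC d k * pochC (c + k) (m - k)
      = pochC (c - d) m := by
  induction m with
  | zero => intro c d; simp [pochC_zero]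
  | succ m ih =>
      intro c d
      have peel : ∀ (g : ℕ → ℂ), ∑ k ∈ range (m + 2), g k = g 0 + ∑ k ∈ range (m + 1), g (k + 1) :=
        fun g => by rw [Finset.sum_range_succ']; exact add_comm _ _
      rw [peel]
      -- split Pascal
      have pascal : ∀ k, ((m+1).choose (k+1) : ℂ) = (m.choose k : ℂ) + (m.choose (k+1) : ℂ) := by
        intro k; rw [Nat.choose_succ_succ]; push_cast; ring
      have split : ∑ k ∈ range (m + 1),
          (-1 : ℂ) ^ (k+1) * ((m+1).choose (k+1) : ℂ) * pochC d (k+1) * pochC (c + (k+1)) (m + 1 - (k+1))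
          = (∑ k ∈ range (m + 1),
              (-1 : ℂ) ^ (k+1) * (m.choose (k+1) : ℂ) * pochC d (k+1) * pochC (c + (k+1)) (m + 1 - (k+1)))
            + ∑ k ∈ range (m + 1),
              (-1 : ℂ) ^ (k+1) * (m.choose k : ℂ) * pochC d (k+1) * pochC (c + (k+1)) (m - k) := by
        rw [← Finset.sum_add_distrib]
        refine Finset.sum_congr rfl fun k hk => ?_
        have : m + 1 - (k + 1) = m - k := by omega
        rw [this, pascal]; ring
      push_cast at split ⊢
      rw [split]
      -- first group: f 0 + shifted = T1
      set F : ℕ → ℂ := fun k => (-1:ℂ)^k * (m.choose k : ℂ) * pochC d k * pochC (c + k) (m+1-k) with hF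
      have A : (-1:ℂ)^0 * ((m + 1).choose 0 : ℂ) * pochC d 0 * pochC (c + 0) (m + 1)
          + ∑ x ∈ range (m+1), (-1:ℂ)^(x+1) * ((m.choose (x+1)) : ℂ) * pochC d (x+1) * pochC (c + ((x:ℂ) + 1)) (m - x)
          = ∑ k ∈ range (m+2), F k := by
        rw [Finset.sum_range_succ' F (m+1)]
        have h0 : F 0 = (-1:ℂ)^0 * ((m + 1).choose 0 : ℂ) * pochC d 0 * pochC (c + 0) (m + 1) := by
          simp [hF, pochC_zero]
        rw [h0, add_comm]
        congr 1
        refine Finset.sum_congr rfl fun x hx => ?_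
        simp only [hF]
        have e : m + 1 - (x+1) = m - x := by omega
        rw [e]
        push_cast; ring
      have B : ∑ k ∈ range (m+2), F k = ∑ k ∈ range (m+1), F k := by
        rw [Finset.sum_range_succ]
        simp [hF, Nat.choose_succ_self]
      rw [← add_assoc, A, B, ← Finset.sum_add_distrib]
      have step : ∑ k ∈ range (m + 1),
          (F k + (-1 : ℂ) ^ (k+1) * (m.choose k : ℂ) * pochC d (k+1) * pochC (c + ((k:ℂ)+1)) (m - k))
          = (c - d) * ∑ k ∈ range (m + 1),
              (-1:ℂ) ^ k * (m.choose k : ℂ) * pochC d k * pochC ((c + 1) + k) (m - k) := by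
        rw [Finset.mul_sum]
        refine Finset.sum_congr rfl fun k hk => ?_
        simp only [hF]
        have e1 : m + 1 - k = 1 + (m - k) := by
          have : k ≤ m := by simpa [Nat.lt_succ_iff] using hk
          omega
        rw [e1, pochC_add, pochC_one, pochC_succ]
        push_cast
        have e2 : c + (k:ℂ) + 1 = c + 1 + (k:ℂ) := by ring
        have e3 : c + ((k:ℂ) + 1) = c + 1 + (k:ℂ) := by ring
        rw [e2, e3]
        ring
      rw [step, ih (c+1) d]
      have final : pochC (c - d) (m + 1) = (c - d) * pochC (c + 1 - d) m := by
        have e : m + 1 = 1 + m := by omega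
        rw [e, pochC_add, pochC_one]
        have e2 : c - d + ((1:ℕ):ℂ) = c + 1 - d := by push_cast; ring
        rw [e2]
      rw [final]

lemma pochC_ne_zero {c : ℂ} {k : ℕ} (h : ∀ i : ℕ, i < k → c + (i : ℂ) ≠ 0) :
    pochC c k ≠ 0 := by
  rw [pochC, Finset.prod_ne_zero_iff]
  exact fun i hi => h i (Finset.mem_range.1 hi)

lemma chu' (m : ℕ) (c d : ℂ) (hc : ∀ i : ℕ, i < m → c + (i : ℂ) ≠ 0) :
    ∑ k ∈ range (m + 1), pochC (-(m : ℂ)) k * pochC d k / (pochC c k * (Nat.factorial k : ℂ))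
      = pochC (c - d) m / pochC c m := by
  rw [← chu m c d, Finset.sum_div]
  refine Finset.sum_congr rfl fun k hk => ?_
  have hkm : k ≤ m := by simpa [Nat.lt_succ_iff] using hk
  have hck : pochC c k ≠ 0 := pochC_ne_zero fun i hi => hc i (by omega)
  have hck2 : pochC (c + k) (m - k) ≠ 0 := by
    apply pochC_ne_zero
    intro i hi
    have e : c + (k : ℂ) + (i : ℂ) = c + ((k + i : ℕ) : ℂ) := by push_cast; ring
    rw [e]; exact hc (k + i) (by omega)
  have hcm : pochC c m = pochC c k * pochC (c + k) (m - k) := by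
    have e : m = k + (m - k) := by omega
    conv_lhs => rw [e, pochC_add]
  have hfk : (Nat.factorial k : ℂ) ≠ 0 := Nat.cast_ne_zero.2 (Nat.factorial_ne_zero _)
  have hfmk : (Nat.factorial (m - k) : ℂ) ≠ 0 := Nat.cast_ne_zero.2 (Nat.factorial_ne_zero _)
  have hfm : (Nat.factorial m : ℂ) ≠ 0 := Nat.cast_ne_zero.2 (Nat.factorial_ne_zero _)
  rw [pochC_neg_nat hkm, Nat.cast_choose ℂ hkm, hcm]
  field_simp

lemma keyNat {p m k : ℕ} (hk : k ≤ m) (hm : m ≤ p) :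
    pochC (-(p : ℂ)) k * (((p - k).choose (m - k)) : ℂ)
      = (-1) ^ m * pochC (-(p : ℂ)) m * pochC (-(m : ℂ)) k / (Nat.factorial m : ℂ) := by
  have hsign : ((-1 : ℂ)) ^ m * (-1) ^ m = 1 := by
    rw [← pow_add, ← two_mul, pow_mul]; norm_num
  have h1 : m - k ≤ p - k := by omega
  have h2 : (p - k) - (m - k) = p - m := by omega
  rw [pochC_neg_nat (le_trans hk hm), pochC_neg_nat hm, pochC_neg_nat hk,
    Nat.cast_choose ℂ h1, h2]
  have hf1 : (Nat.factorial (p - k) : ℂ) ≠ 0 := Nat.cast_ne_zero.2 (Nat.factorial_ne_zero _)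
  have hf2 : (Nat.factorial (m - k) : ℂ) ≠ 0 := Nat.cast_ne_zero.2 (Nat.factorial_ne_zero _)
  have hf3 : (Nat.factorial (p - m) : ℂ) ≠ 0 := Nat.cast_ne_zero.2 (Nat.factorial_ne_zero _)
  have hf4 : (Nat.factorial m : ℂ) ≠ 0 := Nat.cast_ne_zero.2 (Nat.factorial_ne_zero _)
  field_simp
  linear_combination (-(Nat.factorial p : ℂ)) * hsign

lemma pfaff (p : ℕ) (a c z : ℂ) (hc : ∀ i : ℕ, i < p → c + (i : ℂ) ≠ 0) :
    ∑ k ∈ range (p + 1), pochC a k * pochC (-(p : ℂ)) k / pochC c k * z ^ k / (Nat.factorial k : ℂ)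
      = ∑ k ∈ range (p + 1),
          pochC (c - a) k * pochC (-(p : ℂ)) k / pochC c k * (-z) ^ k * (1 - z) ^ (p - k)
            / (Nat.factorial k : ℂ) := by
  have hsign : ∀ m : ℕ, ((-1 : ℂ)) ^ m * (-1) ^ m = 1 := fun m => by
    rw [← pow_add, ← two_mul, pow_mul]; norm_num
  symm
  set G : ℕ → ℕ → ℂ := fun k j =>
    pochC (c - a) k * pochC (-(p : ℂ)) k / pochC c k * (-z) ^ k / (Nat.factorial k : ℂ)
      * ((-z) ^ j * (((p - k).choose j) : ℂ)) with hG
  have expand : ∀ k ∈ range (p + 1),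
      pochC (c - a) k * pochC (-(p : ℂ)) k / pochC c k * (-z) ^ k * (1 - z) ^ (p - k)
          / (Nat.factorial k : ℂ)
        = ∑ j ∈ range (p + 1 - k), G k j := by
    intro k hk
    have hkp : k ≤ p := by simpa [Nat.lt_succ_iff] using hk
    have hb : (1 - z) ^ (p - k) = ∑ j ∈ range (p - k + 1), (-z) ^ j * (((p - k).choose j) : ℂ) := by
      have e : (1 : ℂ) - z = (-z) + 1 := by ring
      rw [e, add_pow]
      refine Finset.sum_congr rfl fun j hj => by ring
    have e2 : p - k + 1 = p + 1 - k := by omega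
    rw [hb, ← e2, Finset.mul_sum, Finset.sum_div]
    refine Finset.sum_congr rfl fun j hj => ?_
    simp only [hG]
    ring
  rw [Finset.sum_congr rfl expand, ← Finset.sum_range_diag_flip (p + 1) G]
  refine Finset.sum_congr rfl fun m hm => ?_
  have hmp : m ≤ p := by simpa [Nat.lt_succ_iff] using hm
  have inner : ∀ k ∈ range (m + 1),
      G k (m - k)
        = ((-z) ^ m * (-1) ^ m * pochC (-(p : ℂ)) m / (Nat.factorial m : ℂ))
            * (pochC (-(m : ℂ)) k * pochC (c - a) k / (pochC c k * (Nat.factorial k : ℂ))) := by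
    intro k hk
    have hkm : k ≤ m := by simpa [Nat.lt_succ_iff] using hk
    have hpow : (-z) ^ k * (-z) ^ (m - k) = (-z) ^ m := by
      rw [← pow_add]; congr 1; omega
    have hkey := keyNat (p := p) hkm hmp
    simp only [hG]
    have expand2 : pochC (c - a) k * pochC (-(p : ℂ)) k / pochC c k * (-z) ^ k / (Nat.factorial k : ℂ)
        * ((-z) ^ (m - k) * (((p - k).choose (m - k)) : ℂ))
        = (pochC (-(p : ℂ)) k * (((p - k).choose (m - k)) : ℂ)) * pochC (c - a) k / pochC c k / (Nat.factorial k : ℂ)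
          * ((-z) ^ k * (-z) ^ (m - k)) := by ring
    rw [expand2, hkey, hpow]
    ring
  rw [Finset.sum_congr rfl inner, ← Finset.mul_sum, chu' m c (c - a) (fun i hi => hc i (by omega))]
  have hca : c - (c - a) = a := by ring
  rw [hca]
  have hzm : (-z) ^ m * (-1) ^ m = z ^ m := by
    rw [neg_pow]
    calc (-1 : ℂ) ^ m * z ^ m * (-1) ^ m = ((-1) ^ m * (-1) ^ m) * z ^ m := by ring
      _ = z ^ m := by rw [hsign]; ring
  calc (-z) ^ m * (-1) ^ m * pochC (-(p : ℂ)) m / (Nat.factorial m : ℂ) * (pochC a m / pochC c m)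
      = ((-z) ^ m * (-1) ^ m) * (pochC (-(p : ℂ)) m * pochC a m / (pochC c m * (Nat.factorial m : ℂ))) := by
        ring
    _ = z ^ m * (pochC (-(p : ℂ)) m * pochC a m / (pochC c m * (Nat.factorial m : ℂ))) := by rw [hzm]
    _ = pochC a m * pochC (-(p : ℂ)) m / pochC c m * z ^ m / (Nat.factorial m : ℂ) := by ring

lemma pfaffSlice (q : ℕ) (A C z : ℂ) (hC : ∀ i : ℕ, i < q → C + (i : ℂ) ≠ 0) (hz : z ≠ 1)
    (μ K : ℕ) (hK : q < K) :
    ∑ j ∈ range K, pochC A j * pochC (-(q : ℂ)) (j + μ) / pochC C j * z ^ j / (Nat.factorial j : ℂ)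
      = (1 - z) ^ q * ((1 - z)⁻¹) ^ μ *
        ∑ j ∈ range K,
          pochC (C - A) j * pochC (-(q : ℂ)) (j + μ) / pochC C j * (z / (z - 1)) ^ j
            / (Nat.factorial j : ℂ) := by
  have h1z : (1 : ℂ) - z ≠ 0 := sub_ne_zero_of_ne (Ne.symm hz)
  by_cases hμ : q < μ
  · have e0 : ∀ (X : ℕ → ℂ) (Y : ℕ → ℂ),
        ∑ j ∈ range K, X j * pochC (-(q : ℂ)) (j + μ) / pochC C j * Y j / (Nat.factorial j : ℂ) = 0 := by
      intro X Y
      refine Finset.sum_eq_zero fun j hj => ?_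
      rw [pochC_neg_zero (by omega : q < j + μ)]
      simp
    rw [e0, e0]
    simp
  · push_neg at hμ
    set p : ℕ := q - μ with hp
    have hqp : (-(q : ℂ)) + (μ : ℂ) = -(p : ℂ) := by
      have : ((p : ℕ) : ℂ) = (q : ℂ) - (μ : ℂ) := by
        rw [hp]; push_cast [Nat.cast_sub hμ]; ring
      rw [this]; ring
    have hsplit : ∀ j : ℕ, pochC (-(q : ℂ)) (j + μ) = pochC (-(q : ℂ)) μ * pochC (-(p : ℂ)) j := by
      intro j
      rw [add_comm j μ, pochC_add, hqp]
    -- left side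
    have hL : ∑ j ∈ range K, pochC A j * pochC (-(q : ℂ)) (j + μ) / pochC C j * z ^ j / (Nat.factorial j : ℂ)
        = pochC (-(q : ℂ)) μ *
          ∑ j ∈ range (p + 1), pochC A j * pochC (-(p : ℂ)) j / pochC C j * z ^ j / (Nat.factorial j : ℂ) := by
      rw [Finset.mul_sum]
      rw [← Finset.sum_subset (Finset.range_subset_range.2 (by omega : p + 1 ≤ K))
        (fun j _ hj => by
          have hpj : p < j := by simp [Finset.mem_range] at hj; omega
          rw [hsplit j, pochC_neg_zero hpj]
          simp)]
      exact Finset.sum_congr rfl fun j hj => by rw [hsplit]; ring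
    -- right side inner
    have hR : ∑ j ∈ range K,
          pochC (C - A) j * pochC (-(q : ℂ)) (j + μ) / pochC C j * (z / (z - 1)) ^ j
            / (Nat.factorial j : ℂ)
        = pochC (-(q : ℂ)) μ *
          ∑ j ∈ range (p + 1),
            pochC (C - A) j * pochC (-(p : ℂ)) j / pochC C j * (z / (z - 1)) ^ j
              / (Nat.factorial j : ℂ) := by
      rw [Finset.mul_sum]
      rw [← Finset.sum_subset (Finset.range_subset_range.2 (by omega : p + 1 ≤ K))
        (fun j _ hj => by
          have hpj : p < j := by simp [Finset.mem_range] at hj; omega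
          rw [hsplit j, pochC_neg_zero hpj]
          simp)]
      exact Finset.sum_congr rfl fun j hj => by rw [hsplit]; ring
    rw [hL, hR, pfaff p A C z (fun i hi => hC i (by omega))]
    rw [Finset.mul_sum, Finset.mul_sum, Finset.mul_sum]
    refine Finset.sum_congr rfl fun j hj => ?_
    have hjp : j ≤ p := by simpa [Nat.lt_succ_iff] using hj
    have e3 : ((1 - z) * (1 - z)⁻¹) = 1 := mul_inv_cancel₀ h1z
    have e1 : (1 - z) ^ q = (1 - z) ^ p * (1 - z) ^ μ := by
      rw [← pow_add]; congr 1; omega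
    have e2 : z / (z - 1) = (-z) * (1 - z)⁻¹ := by
      have e : z - 1 = -(1 - z) := by ring
      rw [e, div_neg, div_eq_mul_inv, neg_mul]
    have e4 : (1 - z) ^ q * ((1 - z)⁻¹) ^ μ = (1 - z) ^ p := by
      rw [e1, mul_assoc, ← mul_pow, e3, one_pow, mul_one]
    have e5 : (1 - z) ^ p * (z / (z - 1)) ^ j = (-z) ^ j * (1 - z) ^ (p - j) := by
      rw [e2, mul_pow, show p = (p - j) + j by omega, pow_add]
      calc (1 - z) ^ (p - j) * (1 - z) ^ j * ((-z) ^ j * ((1 - z)⁻¹) ^ j)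
          = (-z) ^ j * (1 - z) ^ (p - j + j - j) * (((1 - z) * (1 - z)⁻¹) ^ j) := by
            rw [mul_pow]
            have : p - j + j - j = p - j := by omega
            rw [this]
            ring
        _ = (-z) ^ j * (1 - z) ^ (p - j + j - j) := by rw [e3, one_pow, mul_one]
    have key : (1 - z) ^ q * ((1 - z)⁻¹) ^ μ * (z / (z - 1)) ^ j = (-z) ^ j * (1 - z) ^ (p - j) := by
      rw [e4, e5]
    linear_combination (-(pochC (-(q : ℂ)) μ * pochC (C - A) j * pochC (-(p : ℂ)) j / pochC C j
      / (Nat.factorial j : ℂ))) * key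

/-- The comb function
`F_N[a₁, b₁, …, b_{N-1}, a₂; c₁, …, c_N; z₁, …, z_N]`
(summed over all `(m₁, …, m_N) ∈ ℕ^N`; for negative-integer parameters satisfying the
triangle-type inequalities the numerator Pochhammer symbols vanish outside a finite
domain, so the sum is finitely supported). -/
noncomputable def combF (N : ℕ) (a₁ a₂ : ℂ) (b c z : ℕ → ℂ) : ℂ :=
  ∑' m : Fin N → ℕ,
    (fun M : ℕ → ℕ =>
      pochC a₁ (M 1) * (∏ i ∈ Finset.Icc 1 (N - 1), pochC (b i) (M i + M (i + 1))) *
          pochC a₂ (M N) / (∏ i ∈ Finset.Icc 1 N, pochC (c i) (M i)) *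
        ∏ i ∈ Finset.Icc 1 N, z i ^ M i / (Nat.factorial (M i) : ℂ))
      (fun i => if h : i - 1 < N then m ⟨i - 1, h⟩ else 0)

/-- tail index function -/
def tailM (n : ℕ) (m' : Fin n → ℕ) : ℕ → ℕ := fun i => if h : i - 2 < n then m' ⟨i - 2, h⟩ else 0

lemma body_eq (n : ℕ) (hn : 1 ≤ n) (α₁ α₂ : ℂ) (bC cC zC : ℕ → ℂ) (j : ℕ) (m' : Fin n → ℕ) :
    (fun M : ℕ → ℕ =>
      pochC α₁ (M 1) * (∏ i ∈ Finset.Icc 1 (n + 1 - 1), pochC (bC i) (M i + M (i + 1))) *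
          pochC α₂ (M (n + 1)) / (∏ i ∈ Finset.Icc 1 (n + 1), pochC (cC i) (M i)) *
        ∏ i ∈ Finset.Icc 1 (n + 1), zC i ^ M i / (Nat.factorial (M i) : ℂ))
      (fun i => if h : i - 1 < n + 1 then (Fin.cons j m' : Fin (n + 1) → ℕ) ⟨i - 1, h⟩ else 0)
    = (pochC α₁ j * pochC (bC 1) (j + m' ⟨0, hn⟩) / pochC (cC 1) j * zC 1 ^ j
          / (Nat.factorial j : ℂ))
      * (zC 2 ^ (m' ⟨0, hn⟩) / (Nat.factorial (m' ⟨0, hn⟩) : ℂ))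
      * ((∏ i ∈ Finset.Icc 2 n, pochC (bC i) (tailM n m' i + tailM n m' (i + 1))) *
            pochC α₂ (tailM n m' (n + 1))
          / (∏ i ∈ Finset.Icc 2 (n + 1), pochC (cC i) (tailM n m' i)) *
          ∏ i ∈ Finset.Icc 3 (n + 1), zC i ^ tailM n m' i / (Nat.factorial (tailM n m' i) : ℂ)) := by
  set M : ℕ → ℕ := fun i => if h : i - 1 < n + 1 then (Fin.cons j m' : Fin (n + 1) → ℕ) ⟨i - 1, h⟩ else 0 with hMdef
  simp only []
  have hM1 : M 1 = j := by
    simp only [hMdef]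
    rw [dif_pos (by omega : 1 - 1 < n + 1)]
    have e : (⟨1 - 1, by omega⟩ : Fin (n + 1)) = 0 := by
      apply Fin.ext; simp
    rw [e, Fin.cons_zero]
  have hMt : ∀ i, 2 ≤ i → i ≤ n + 1 → M i = tailM n m' i := by
    intro i h2 h3
    simp only [hMdef, tailM]
    rw [dif_pos (by omega : i - 1 < n + 1), dif_pos (by omega : i - 2 < n)]
    have e : (⟨i - 1, by omega⟩ : Fin (n + 1)) = Fin.succ ⟨i - 2, by omega⟩ := by
      apply Fin.ext; simp; omega
    rw [e, Fin.cons_succ]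
  have hM2 : M 2 = m' ⟨0, hn⟩ := by
    rw [hMt 2 le_rfl (by omega)]
    simp only [tailM]
    rw [dif_pos (by omega : 2 - 2 < n)]
  -- split products
  have s1 : Finset.Icc 1 (n + 1 - 1) = insert 1 (Finset.Icc 2 n) := by
    ext x; simp only [Finset.mem_Icc, Finset.mem_insert]; omega
  have s2 : Finset.Icc 1 (n + 1) = insert 1 (Finset.Icc 2 (n + 1)) := by
    ext x; simp only [Finset.mem_Icc, Finset.mem_insert]; omega
  have s3 : Finset.Icc 2 (n + 1) = insert 2 (Finset.Icc 3 (n + 1)) := by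
    ext x; simp only [Finset.mem_Icc, Finset.mem_insert]; omega
  have n1 : (1 : ℕ) ∉ Finset.Icc 2 n := by simp
  have n2 : (1 : ℕ) ∉ Finset.Icc 2 (n + 1) := by simp
  have n3 : (2 : ℕ) ∉ Finset.Icc 3 (n + 1) := by simp
  rw [s1, s2, Finset.prod_insert n1, Finset.prod_insert n2, Finset.prod_insert n2]
  have pb : ∏ i ∈ Finset.Icc 2 n, pochC (bC i) (M i + M (i + 1))
      = ∏ i ∈ Finset.Icc 2 n, pochC (bC i) (tailM n m' i + tailM n m' (i + 1)) := by
    refine Finset.prod_congr rfl fun i hi => ?_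
    simp only [Finset.mem_Icc] at hi
    rw [hMt i (by omega) (by omega), hMt (i + 1) (by omega) (by omega)]
  have pc : ∏ i ∈ Finset.Icc 2 (n + 1), pochC (cC i) (M i)
      = ∏ i ∈ Finset.Icc 2 (n + 1), pochC (cC i) (tailM n m' i) := by
    refine Finset.prod_congr rfl fun i hi => ?_
    simp only [Finset.mem_Icc] at hi
    rw [hMt i (by omega) (by omega)]
  have pz : ∏ i ∈ Finset.Icc 2 (n + 1), zC i ^ M i / (Nat.factorial (M i) : ℂ)
      = (zC 2 ^ (m' ⟨0, hn⟩) / (Nat.factorial (m' ⟨0, hn⟩) : ℂ)) *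
          ∏ i ∈ Finset.Icc 3 (n + 1), zC i ^ tailM n m' i / (Nat.factorial (tailM n m' i) : ℂ) := by
    rw [s3, Finset.prod_insert n3, hM2]
    congr 1
    refine Finset.prod_congr rfl fun i hi => ?_
    simp only [Finset.mem_Icc] at hi
    rw [hMt i (by omega) (by omega)]
  rw [pb, pc, pz, hM1, hM2, hMt (n + 1) (by omega) (by omega)]
  ring

lemma sum_piFinset_succ {R : Type*} [AddCommMonoid R] (n K : ℕ) (f : (Fin (n + 1) → ℕ) → R) :
    ∑ m ∈ Fintype.piFinset (fun _ : Fin (n + 1) => Finset.range K), f m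
      = ∑ j ∈ Finset.range K,
          ∑ m' ∈ Fintype.piFinset (fun _ : Fin n => Finset.range K), f (Fin.cons j m') := by
  rw [← Finset.sum_product']
  refine Finset.sum_nbij' (i := fun m => (m 0, Fin.tail m)) (j := fun p => Fin.cons p.1 p.2)
    ?_ ?_ ?_ ?_ ?_
  · intro m hm
    simp only [Fintype.mem_piFinset] at hm
    simp only [Finset.mem_product, Fintype.mem_piFinset]
    exact ⟨hm 0, fun i => hm i.succ⟩
  · intro p hp
    simp only [Finset.mem_product, Fintype.mem_piFinset] at hp
    simp only [Fintype.mem_piFinset]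
    intro i
    refine Fin.cases ?_ ?_ i
    · simpa using hp.1
    · intro i'; simpa using hp.2 i'
  · intro m hm; exact Fin.cons_self_tail m
  · intro p hp; simp [Fin.tail_cons]
  · intro m hm; rw [Fin.cons_self_tail m]

lemma combF_eq_sum (N : ℕ) (α₁ α₂ : ℂ) (b c z : ℕ → ℂ) (K : ℕ)
    (h₁ : ∀ k, K ≤ k → pochC α₁ k = 0)
    (hb : ∀ i, 1 ≤ i → i ≤ N - 1 → ∀ k, K ≤ k → pochC (b i) k = 0) :
    combF N α₁ α₂ b c z
      = ∑ m ∈ Fintype.piFinset (fun _ : Fin N => Finset.range K),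
          (fun M : ℕ → ℕ =>
            pochC α₁ (M 1) * (∏ i ∈ Finset.Icc 1 (N - 1), pochC (b i) (M i + M (i + 1))) *
                pochC α₂ (M N) / (∏ i ∈ Finset.Icc 1 N, pochC (c i) (M i)) *
              ∏ i ∈ Finset.Icc 1 N, z i ^ M i / (Nat.factorial (M i) : ℂ))
            (fun i => if h : i - 1 < N then m ⟨i - 1, h⟩ else 0) := by
  rw [combF]
  apply tsum_eq_sum
  intro m hm
  simp only [Fintype.mem_piFinset, Finset.mem_range, not_forall, not_lt] at hm
  obtain ⟨i, hi⟩ := hm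
  set M : ℕ → ℕ := fun j => if h : j - 1 < N then m ⟨j - 1, h⟩ else 0 with hM
  by_cases h0 : (i : ℕ) = 0
  · have hM1 : M 1 = m i := by
      simp only [hM]
      rw [dif_pos (by omega : 1 - 1 < N)]
      exact congrArg m (Fin.ext (by simp [h0]))
    have : pochC α₁ (M 1) = 0 := by rw [hM1]; exact h₁ _ hi
    simp only [this, zero_mul, zero_div]
  · have hmem : (i : ℕ) ∈ Finset.Icc 1 (N - 1) := by
      simp only [Finset.mem_Icc]
      have := i.isLt
      omega
    have hMi : M ((i : ℕ) + 1) = m i := by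
      simp only [hM]
      rw [dif_pos (by simp [i.isLt] : (i : ℕ) + 1 - 1 < N)]
      exact congrArg m (Fin.ext (by simp))
    have hz : pochC (b (i : ℕ)) (M (i : ℕ) + M ((i : ℕ) + 1)) = 0 := by
      apply hb (i : ℕ) (by omega) (by have := i.isLt; omega)
      rw [hMi]; omega
    have : (∏ i ∈ Finset.Icc 1 (N - 1), pochC (b i) (M i + M (i + 1))) = 0 :=
      Finset.prod_eq_zero hmem hz
    simp only [this, mul_zero, zero_mul, zero_div]

/-- Pfaff-type transformation of the comb function (eq. (A.17)). -/
theorem stmt_10 (N : ℕ) (hN : 2 ≤ N) (a₁ a₂ : ℤ) (b c : ℕ → ℤ)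
    (ha₁ : a₁ < 0) (ha₂ : a₂ < 0)
    (hb : ∀ i, 1 ≤ i → i ≤ N - 1 → b i < 0) (hc : ∀ i, 1 ≤ i → i ≤ N → c i < 0)
    (h1 : c 1 < a₁)
    (h2 : ∀ i, 1 ≤ i → i ≤ N - 1 → c i < b i ∧ c (i + 1) < b i)
    (h3 : c N < a₂)
    (z : ℕ → ℂ) (hz : z 1 ≠ 1) :
    combF N (a₁ : ℂ) (a₂ : ℂ) (fun i => (b i : ℂ)) (fun i => (c i : ℂ)) z =
      (1 - z 1) ^ (-b 1) *
        combF N ((c 1 - a₁ : ℤ) : ℂ) (a₂ : ℂ) (fun i => (b i : ℂ)) (fun i => (c i : ℂ))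
          (fun i => if i = 1 then z 1 / (z 1 - 1)
            else if i = 2 then -z 2 / (z 1 - 1) else z i) := by
  obtain ⟨n, rfl⟩ : ∃ n, N = n + 1 := ⟨N - 1, by omega⟩
  have hn : 1 ≤ n := by omega
  have hb1 : b 1 < 0 := hb 1 le_rfl (by omega)
  have hc1b : c 1 < b 1 := (h2 1 le_rfl (by omega)).1
  set q : ℕ := (-b 1).toNat with hqdef
  have hqb : ((b 1 : ℤ) : ℂ) = -(q : ℂ) := by
    have h' : (b 1 : ℤ) = -(q : ℤ) := by omega
    rw [h']; push_cast; ring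
  have hvan : ∀ t : ℤ, t < 0 → ∀ k : ℕ, (-t).toNat < k → pochC (t : ℂ) k = 0 := by
    intro t ht k hk
    apply Finset.prod_eq_zero (Finset.mem_range.2 hk)
    have h' : (((-t).toNat : ℕ) : ℂ) = -(t : ℂ) := by
      have h'' : (((-t).toNat : ℕ) : ℤ) = -t := Int.toNat_of_nonneg (by omega)
      exact_mod_cast congrArg (Int.cast : ℤ → ℂ) h''
    rw [h']; ring
  set K : ℕ := (a₁ - c 1).toNat + (-a₁).toNat + (-a₂).toNat +
      (∑ i ∈ Finset.Icc 1 n, (-b i).toNat) + 1 with hKdef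
  have hKb : ∀ i, 1 ≤ i → i ≤ n → (-b i).toNat < K := by
    intro i hi1 hi2
    have hle : (-b i).toNat ≤ ∑ i ∈ Finset.Icc 1 n, (-b i).toNat :=
      Finset.single_le_sum (f := fun i => (-b i).toNat) (fun _ _ => Nat.zero_le _)
        (Finset.mem_Icc.2 ⟨hi1, hi2⟩)
    omega
  have hqK : q < K := by have := hKb 1 le_rfl hn; omega
  have h₁ : ∀ k, K ≤ k → pochC ((a₁ : ℤ) : ℂ) k = 0 := fun k hk => hvan a₁ ha₁ k (by omega)
  have h₁' : ∀ k, K ≤ k → pochC (((c 1 - a₁ : ℤ)) : ℂ) k = 0 := fun k hk =>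
    hvan _ (by omega) k (by omega)
  have hbK : ∀ i, 1 ≤ i → i ≤ n + 1 - 1 → ∀ k, K ≤ k → pochC ((b i : ℤ) : ℂ) k = 0 := by
    intro i hi1 hi2 k hk
    exact hvan _ (hb i hi1 hi2) k (by have := hKb i hi1 (by omega); omega)
  rw [combF_eq_sum (n + 1) _ _ _ _ _ K h₁ hbK,
      combF_eq_sum (n + 1) _ _ _ _ _ K h₁' hbK,
      sum_piFinset_succ, sum_piFinset_succ]
  rw [Finset.sum_comm]
  conv_rhs => rw [Finset.sum_comm]
  rw [Finset.mul_sum]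
  refine Finset.sum_congr rfl fun m' hm' => ?_
  rw [Finset.sum_congr rfl (fun j _ => body_eq n hn ((a₁ : ℤ) : ℂ) ((a₂ : ℤ) : ℂ)
      (fun i => ((b i : ℤ) : ℂ)) (fun i => ((c i : ℤ) : ℂ)) z j m'),
    Finset.sum_congr rfl (fun j _ => body_eq n hn (((c 1 - a₁ : ℤ)) : ℂ) ((a₂ : ℤ) : ℂ)
      (fun i => ((b i : ℤ) : ℂ)) (fun i => ((c i : ℤ) : ℂ))
      (fun i => if i = 1 then z 1 / (z 1 - 1) else if i = 2 then -z 2 / (z 1 - 1) else z i) j m')]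
  have r1 : (if (1 : ℕ) = 1 then z 1 / (z 1 - 1) else if (1 : ℕ) = 2 then -z 2 / (z 1 - 1) else z 1)
      = z 1 / (z 1 - 1) := by norm_num
  have r2 : (if (2 : ℕ) = 1 then z 1 / (z 1 - 1) else if (2 : ℕ) = 2 then -z 2 / (z 1 - 1) else z 2)
      = -z 2 / (z 1 - 1) := by norm_num
  rw [r1, r2, hqb]
  have hzP3 : ∏ i ∈ Finset.Icc 3 (n + 1),
        (if i = 1 then z 1 / (z 1 - 1) else if i = 2 then -z 2 / (z 1 - 1) else z i) ^ tailM n m' i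
          / (Nat.factorial (tailM n m' i) : ℂ)
      = ∏ i ∈ Finset.Icc 3 (n + 1), z i ^ tailM n m' i / (Nat.factorial (tailM n m' i) : ℂ) := by
    refine Finset.prod_congr rfl fun i hi => ?_
    simp only [Finset.mem_Icc] at hi
    rw [if_neg (by omega), if_neg (by omega)]
  rw [hzP3]
  set μ : ℕ := m' ⟨0, hn⟩ with hμdef
  set W : ℂ := (∏ i ∈ Finset.Icc 2 n,
        pochC ((b i : ℤ) : ℂ) (tailM n m' i + tailM n m' (i + 1))) *
      pochC ((a₂ : ℤ) : ℂ) (tailM n m' (n + 1))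
      / (∏ i ∈ Finset.Icc 2 (n + 1), pochC ((c i : ℤ) : ℂ) (tailM n m' i)) *
      ∏ i ∈ Finset.Icc 3 (n + 1), z i ^ tailM n m' i / (Nat.factorial (tailM n m' i) : ℂ)
    with hWdef
  have hC1 : ∀ i : ℕ, i < q → ((c 1 : ℤ) : ℂ) + (i : ℂ) ≠ 0 := by
    intro i hi
    have hne : (c 1 + (i : ℤ)) ≠ 0 := by omega
    intro hcon
    apply hne
    exact_mod_cast hcon
  have hslice := pfaffSlice q ((a₁ : ℤ) : ℂ) ((c 1 : ℤ) : ℂ) (z 1) hC1 hz μ K hqK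
  have hCA : ((c 1 : ℤ) : ℂ) - ((a₁ : ℤ) : ℂ) = ((c 1 - a₁ : ℤ) : ℂ) := by push_cast; ring
  rw [hCA] at hslice
  have eL : ∑ j ∈ Finset.range K,
        pochC ((a₁ : ℤ) : ℂ) j * pochC (-(q : ℂ)) (j + μ) / pochC ((c 1 : ℤ) : ℂ) j * z 1 ^ j
            / (Nat.factorial j : ℂ) * (z 2 ^ μ / (Nat.factorial μ : ℂ)) * W
      = (∑ j ∈ Finset.range K,
          pochC ((a₁ : ℤ) : ℂ) j * pochC (-(q : ℂ)) (j + μ) / pochC ((c 1 : ℤ) : ℂ) j * z 1 ^ j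
            / (Nat.factorial j : ℂ)) * (z 2 ^ μ / (Nat.factorial μ : ℂ) * W) := by
    rw [Finset.sum_mul]
    exact Finset.sum_congr rfl fun j _ => by ring
  have eR : ∑ j ∈ Finset.range K,
        pochC ((c 1 - a₁ : ℤ) : ℂ) j * pochC (-(q : ℂ)) (j + μ) / pochC ((c 1 : ℤ) : ℂ) j
            * (z 1 / (z 1 - 1)) ^ j / (Nat.factorial j : ℂ)
            * ((-z 2 / (z 1 - 1)) ^ μ / (Nat.factorial μ : ℂ)) * W
      = (∑ j ∈ Finset.range K,
          pochC ((c 1 - a₁ : ℤ) : ℂ) j * pochC (-(q : ℂ)) (j + μ) / pochC ((c 1 : ℤ) : ℂ) j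
            * (z 1 / (z 1 - 1)) ^ j / (Nat.factorial j : ℂ))
          * ((-z 2 / (z 1 - 1)) ^ μ / (Nat.factorial μ : ℂ) * W) := by
    rw [Finset.sum_mul]
    exact Finset.sum_congr rfl fun j _ => by ring
  rw [eL, eR, hslice]
  have h1z : (1 : ℂ) - z 1 ≠ 0 := sub_ne_zero_of_ne (Ne.symm hz)
  have hzpow : (1 - z 1) ^ (-b 1) = (1 - z 1) ^ (q : ℕ) := by
    have e : -b 1 = (q : ℤ) := by omega
    rw [e, zpow_natCast]
  have hm2 : ((1 - z 1)⁻¹) ^ μ * (z 2) ^ μ = ((-z 2) / (z 1 - 1)) ^ μ := by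
    rw [← mul_pow]
    congr 1
    rw [show z 1 - 1 = -(1 - z 1) by ring, neg_div_neg_eq, div_eq_mul_inv, mul_comm]
  rw [hzpow]
  set S' : ℂ := ∑ j ∈ Finset.range K,
      pochC ((c 1 - a₁ : ℤ) : ℂ) j * pochC (-(q : ℂ)) (j + μ) / pochC ((c 1 : ℤ) : ℂ) j
        * (z 1 / (z 1 - 1)) ^ j / (Nat.factorial j : ℂ) with hS'
  linear_combination ((1 - z 1) ^ (q : ℕ) * S' * W / (Nat.factorial μ : ℂ)) * hm2
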